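/- arXiv:2507.13947 — 3 statements merged into one kernel-verified Lean document; each statement's English description precedes it below -/
import Mathlib

section
/- Let ν, ω : [0,∞) → (0,∞) be differentiable with ν(t) > 1 for all t, and let h(x,t) = (ω(t)^{ν(t)} / Γ(ν(t))) x^{−(ν(t)+1)} e^{−ω(t)/x} be the corresponding time-dependent inverse Gamma density. Then for every t ≥ 0, ∫₀^∞ |∂_t h(x,t)| dx ≤ |ν'(t)| A(t) + |ω'(t)| B(t), where A(t) = |log ω(t) − ψ(ν(t))| + 1 + ν(t)/(e·ω(t)) + ω(t)/(ν(t) − 1) and B(t) = 2 ν(t)/ω(t), with ψ(z) = Γ'(z)/Γ(z) the digamma function and e Euler's number. -/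
open Real MeasureTheory

/-- The digamma function `ψ(z) = Γ'(z)/Γ(z)`, the logarithmic derivative of the Gamma
function. -/
noncomputable def digamma (z : ℝ) : ℝ := deriv Real.Gamma z / Real.Gamma z

open Set

lemma aux_log_le {y : ℝ} (hy : 0 < y) : Real.log y ≤ y / Real.exp 1 := by
  have h := Real.log_le_sub_one_of_pos (div_pos hy (Real.exp_pos 1))
  rw [Real.log_div hy.ne' (Real.exp_pos 1).ne', Real.log_exp] at h
  linarith

lemma aux_abs_log_le {x : ℝ} (hx : 0 < x) :
    |Real.log x| ≤ x⁻¹ / Real.exp 1 + 1 + x := by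
  rcases le_or_gt x 1 with h | h
  · have h1 : Real.log x ≤ 0 := Real.log_nonpos hx.le h
    rw [abs_of_nonpos h1, ← Real.log_inv]
    have h2 := aux_log_le (inv_pos.2 hx)
    linarith [hx.le]
  · have h1 : 0 ≤ Real.log x := Real.log_nonneg h.le
    rw [abs_of_nonneg h1]
    have h3 : 0 ≤ x⁻¹ / Real.exp 1 := by positivity
    linarith [Real.log_le_sub_one_of_pos hx]

lemma gamma_scaled_integrable {s c : ℝ} (hs : 0 < s) (hc : 0 < c) :
    IntegrableOn (fun y : ℝ => y ^ (s - 1) * Real.exp (-(c * y))) (Ioi 0) := by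
  have h1 : IntegrableOn (fun y : ℝ => Real.exp (-y) * y ^ (s - 1)) (Ioi 0) :=
    Real.GammaIntegral_convergent hs
  have h2 : IntegrableOn (fun y : ℝ => Real.exp (-(c * y)) * (c * y) ^ (s - 1)) (Ioi 0) := by
    have := (integrableOn_Ioi_comp_mul_left_iff
      (fun y : ℝ => Real.exp (-y) * y ^ (s - 1)) 0 hc).2 (by simpa using h1)
    simpa using this
  have h3 : IntegrableOn (fun y : ℝ =>
      c ^ (s - 1) * (y ^ (s - 1) * Real.exp (-(c * y)))) (Ioi 0) := by
    apply h2.congr_fun ?_ measurableSet_Ioi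
    intro y hy
    simp only
    rw [Real.mul_rpow hc.le (le_of_lt hy)]
    ring
  have h4 := h3.const_mul ((c : ℝ) ^ (s - 1))⁻¹
  apply MeasureTheory.IntegrableOn.congr_fun h4 ?_ measurableSet_Ioi
  intro y hy
  simp only
  have hcs : c ^ (s - 1) ≠ 0 := (Real.rpow_pos_of_pos hc _).ne'
  field_simp

lemma gamma_scaled_integral {s c : ℝ} (hs : 0 < s) (hc : 0 < c) :
    ∫ y in Ioi (0:ℝ), y ^ (s - 1) * Real.exp (-(c * y)) = Real.Gamma s / c ^ s := by
  have h1 : ∫ y in Ioi (0:ℝ), Real.exp (-(c * y)) * (c * y) ^ (s - 1) =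
      c⁻¹ * Real.Gamma s := by
    rw [Real.Gamma_eq_integral hs]
    have := integral_comp_mul_left_Ioi (fun y : ℝ => Real.exp (-y) * y ^ (s - 1)) 0 hc
    simpa [smul_eq_mul] using this
  have h2 : ∫ y in Ioi (0:ℝ), Real.exp (-(c * y)) * (c * y) ^ (s - 1) =
      c ^ (s - 1) * ∫ y in Ioi (0:ℝ), y ^ (s - 1) * Real.exp (-(c * y)) := by
    rw [← integral_const_mul]
    apply setIntegral_congr_fun measurableSet_Ioi
    intro y hy
    simp only
    rw [Real.mul_rpow hc.le (le_of_lt hy)]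
    ring
  have hpow : c ^ s = c ^ (s - 1) * c := by
    rw [show s = s - 1 + 1 by ring, Real.rpow_add_one hc.ne']
    ring_nf
  rw [h2] at h1
  have hcs : c ^ (s - 1) ≠ 0 := (Real.rpow_pos_of_pos hc _).ne'
  rw [hpow]
  field_simp at h1 ⊢
  linear_combination h1

lemma eqOn_key {s c : ℝ} : EqOn
    (fun x : ℝ => (|(-1:ℝ)| * x ^ ((-1:ℝ) - 1)) •
      ((fun y : ℝ => y ^ (s - 1) * Real.exp (-(c * y))) (x ^ (-1:ℝ))))
    (fun x : ℝ => x ^ (-s - 1) * Real.exp (-c / x)) (Ioi 0) := by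
  intro x hx
  have hx0 : (0:ℝ) < x := hx
  simp only [smul_eq_mul, abs_neg, abs_one, one_mul]
  rw [← Real.rpow_mul hx0.le, ← mul_assoc, ← Real.rpow_add hx0, Real.rpow_neg_one]
  have h1 : (-1:ℝ) - 1 + -1 * (s - 1) = -s - 1 := by ring
  have h2 : -(c * x⁻¹) = -c / x := by field_simp
  rw [h1, h2]

lemma invGamma_integrable {s c : ℝ} (hs : 0 < s) (hc : 0 < c) :
    IntegrableOn (fun x : ℝ => x ^ (-s - 1) * Real.exp (-c / x)) (Ioi 0) := by
  have key := (integrableOn_Ioi_comp_rpow_iff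
    (fun y : ℝ => y ^ (s - 1) * Real.exp (-(c * y))) (p := (-1:ℝ)) (by norm_num)).2
    (gamma_scaled_integrable hs hc)
  exact MeasureTheory.IntegrableOn.congr_fun key eqOn_key measurableSet_Ioi

lemma invGamma_integral {s c : ℝ} (hs : 0 < s) (hc : 0 < c) :
    ∫ x in Ioi (0:ℝ), x ^ (-s - 1) * Real.exp (-c / x) = Real.Gamma s / c ^ s := by
  rw [← gamma_scaled_integral hs hc,
    ← integral_comp_rpow_Ioi (fun y : ℝ => y ^ (s - 1) * Real.exp (-(c * y)))
      (p := (-1:ℝ)) (by norm_num)]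
  exact (setIntegral_congr_fun measurableSet_Ioi eqOn_key).symm

set_option maxHeartbeats 1000000 in
/-- `L¹` bound on the time derivative of a time-dependent inverse Gamma density with shape
`ν(t) > 1` and scale `ω(t) > 0`:
`∫₀^∞ |∂ₜ h(x,t)| dx ≤ |ν'(t)| A(t) + |ω'(t)| B(t)`, where
`A(t) = |log ω(t) − ψ(ν(t))| + 1 + ν(t)/(e ω(t)) + ω(t)/(ν(t) − 1)` and
`B(t) = 2 ν(t)/ω(t)`. -/
theorem inverse_gamma_time_derivative_L1_bound
    (ν ω ν' ω' : ℝ → ℝ)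
    (hν1 : ∀ t ≥ (0:ℝ), 1 < ν t) (hωpos : ∀ t ≥ (0:ℝ), 0 < ω t)
    (hν : ∀ t ≥ (0:ℝ), HasDerivAt ν (ν' t) t) (hω : ∀ t ≥ (0:ℝ), HasDerivAt ω (ω' t) t)
    (t : ℝ) (ht : 0 ≤ t) :
    ∫ x in Set.Ioi (0:ℝ),
        |deriv (fun τ => ω τ ^ ν τ / Real.Gamma (ν τ) * x ^ (-(ν τ + 1)) *
          Real.exp (-ω τ / x)) t| ≤
      |ν' t| * (|Real.log (ω t) - digamma (ν t)| + 1 + ν t / (Real.exp 1 * ω t) +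
          ω t / (ν t - 1)) +
        |ω' t| * (2 * ν t / ω t) := by
  have ha : 1 < ν t := hν1 t ht
  have ha0 : 0 < ν t := by linarith
  have ha1 : 0 < ν t - 1 := by linarith
  have ha2 : 0 < ν t + 1 := by linarith
  have hb : 0 < ω t := hωpos t ht
  have hΓpos : 0 < Real.Gamma (ν t) := Real.Gamma_pos_of_pos ha0
  have hepos : 0 < Real.exp 1 := Real.exp_pos 1
  set a := ν t with ha_def
  set b := ω t with hb_def
  set p := ν' t with hp_def
  set q := ω' t with hq_def
  set dΓ := deriv Real.Gamma a with hdΓ_def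
  set C := b ^ a / Real.Gamma a with hC_def
  have hCpos : 0 < C := div_pos (Real.rpow_pos_of_pos hb a) hΓpos
  set L : ℝ := Real.log b - dΓ / Real.Gamma a with hL_def
  set K0 : ℝ := |p| * (|L| + 1) + |q| * (a / b) with hK0_def
  set K1 : ℝ := |p| / Real.exp 1 + |q| with hK1_def
  have hK0 : 0 ≤ K0 := by positivity
  have hK1 : 0 ≤ K1 := by positivity
  set Φ : ℝ → ℝ := fun x => C * K0 * (x ^ (-a - 1) * Real.exp (-b / x)) +
      C * K1 * (x ^ (-(a + 1) - 1) * Real.exp (-b / x)) +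
      C * |p| * (x ^ (-(a - 1) - 1) * Real.exp (-b / x)) with hΦ_def
  -- derivative identity
  have hderiv : ∀ x : ℝ, 0 < x →
      HasDerivAt (fun τ => ω τ ^ ν τ / Real.Gamma (ν τ) * x ^ (-(ν τ + 1)) *
        Real.exp (-ω τ / x))
      ((C * x ^ (-(a + 1)) * Real.exp (-b / x)) *
        (p * (L - Real.log x) + q * (a / b - 1 / x))) t := by
    intro x hx
    have hne : ∀ m : ℕ, ν t ≠ -m := by
      intro m hcontra
      have h0 : (0:ℝ) ≤ (m : ℝ) := Nat.cast_nonneg m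
      have hEq : a = -(m : ℝ) := hcontra
      have h1 : (0:ℝ) < a := ha0
      rw [hEq] at h1
      linarith
    have hΓ : HasDerivAt (fun τ => Real.Gamma (ν τ)) (dΓ * p) t :=
      HasDerivAt.comp t (Real.differentiableAt_Gamma hne).hasDerivAt (hν t ht)
    have hA1 : HasDerivAt (fun τ => ω τ ^ ν τ)
        (q * a * b ^ (a - 1) + p * b ^ a * Real.log b) t :=
      (hω t ht).rpow (hν t ht) hb
    have hA := hA1.div hΓ hΓpos.ne'
    have hBexp : HasDerivAt (fun τ => -(ν τ + 1)) (-p) t := ((hν t ht).add_const 1).neg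
    have hB : HasDerivAt (fun τ => x ^ (-(ν τ + 1)))
        (0 * (-(a + 1)) * x ^ (-(a + 1) - 1) + (-p) * x ^ (-(a + 1)) * Real.log x) t :=
      (hasDerivAt_const t x).rpow hBexp hx
    have hE : HasDerivAt (fun τ => Real.exp (-ω τ / x))
        (Real.exp (-b / x) * (-q / x)) t := ((hω t ht).neg.div_const x).exp
    have total := (hA.mul hB).mul hE
    refine total.congr_deriv ?_
    symm
    simp only [Pi.mul_apply, Pi.div_apply, ← ha_def, ← hb_def]
    rw [Real.rpow_sub hb, Real.rpow_one]
    simp only [hC_def, hL_def]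
    field_simp
    ring
  -- pointwise bound
  have hbound : ∀ x ∈ Ioi (0:ℝ),
      |deriv (fun τ => ω τ ^ ν τ / Real.Gamma (ν τ) * x ^ (-(ν τ + 1)) *
        Real.exp (-ω τ / x)) t| ≤ Φ x := by
    intro x hx
    have hx0 : (0:ℝ) < x := hx
    rw [(hderiv x hx0).deriv]
    have hhx : 0 < C * x ^ (-(a + 1)) * Real.exp (-b / x) := by positivity
    have habs : |p * (L - Real.log x) + q * (a / b - 1 / x)| ≤
        |p| * (|L| + |Real.log x|) + |q| * (a / b + 1 / x) := by
      calc |p * (L - Real.log x) + q * (a / b - 1 / x)|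
          ≤ |p * (L - Real.log x)| + |q * (a / b - 1 / x)| := abs_add_le _ _
        _ = |p| * |L - Real.log x| + |q| * |a / b - 1 / x| := by rw [abs_mul, abs_mul]
        _ ≤ |p| * (|L| + |Real.log x|) + |q| * (a / b + 1 / x) := by
            have h1 : |L - Real.log x| ≤ |L| + |Real.log x| := abs_sub _ _
            have h2 : |a / b - 1 / x| ≤ a / b + 1 / x := by
              have := abs_sub (a / b) (1 / x)
              rw [abs_of_nonneg (by positivity : (0:ℝ) ≤ a / b),
                abs_of_nonneg (by positivity : (0:ℝ) ≤ 1 / x)] at this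
              exact this
            have hp0 : (0:ℝ) ≤ |p| := abs_nonneg _
            have hq0 : (0:ℝ) ≤ |q| := abs_nonneg _
            nlinarith
    have hlog := aux_abs_log_le hx0
    have hM : |p * (L - Real.log x) + q * (a / b - 1 / x)| ≤
        K0 + K1 * x⁻¹ + |p| * x := by
      have hp0 : (0:ℝ) ≤ |p| := abs_nonneg _
      have : |p| * (|L| + |Real.log x|) + |q| * (a / b + 1 / x) ≤
          |p| * (|L| + (x⁻¹ / Real.exp 1 + 1 + x)) + |q| * (a / b + 1 / x) := by
        nlinarith
      have heq : |p| * (|L| + (x⁻¹ / Real.exp 1 + 1 + x)) + |q| * (a / b + 1 / x) =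
          K0 + K1 * x⁻¹ + |p| * x := by
        simp only [hK0_def, hK1_def]
        field_simp
        ring
      linarith [habs]
    calc |(C * x ^ (-(a + 1)) * Real.exp (-b / x)) *
          (p * (L - Real.log x) + q * (a / b - 1 / x))|
        = (C * x ^ (-(a + 1)) * Real.exp (-b / x)) *
          |p * (L - Real.log x) + q * (a / b - 1 / x)| := by
          rw [abs_mul, abs_of_nonneg hhx.le]
      _ ≤ (C * x ^ (-(a + 1)) * Real.exp (-b / x)) * (K0 + K1 * x⁻¹ + |p| * x) :=
          mul_le_mul_of_nonneg_left hM hhx.le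
      _ = Φ x := by
          have e0 : x ^ (-(a + 1)) = x ^ (-a - 1) := by
            congr 1; ring
          have e1 : x ^ (-a - 1) * x⁻¹ = x ^ (-(a + 1) - 1) := by
            rw [← Real.rpow_neg_one x, ← Real.rpow_add hx0]
            congr 1; ring
          have e2 : x ^ (-a - 1) * x = x ^ (-(a - 1) - 1) := by
            nth_rewrite 2 [← Real.rpow_one x]
            rw [← Real.rpow_add hx0]
            congr 1; ring
          simp only [hΦ_def]
          rw [e0]
          calc C * x ^ (-a - 1) * Real.exp (-b / x) * (K0 + K1 * x⁻¹ + |p| * x)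
              = C * K0 * (x ^ (-a - 1) * Real.exp (-b / x)) +
                C * K1 * ((x ^ (-a - 1) * x⁻¹) * Real.exp (-b / x)) +
                C * |p| * ((x ^ (-a - 1) * x) * Real.exp (-b / x)) := by ring
            _ = _ := by rw [e1, e2]
  -- integrability of Φ
  have hint1 := invGamma_integrable (s := a) (c := b) ha0 hb
  have hint2 := invGamma_integrable (s := a + 1) (c := b) ha2 hb
  have hint3 := invGamma_integrable (s := a - 1) (c := b) ha1 hb
  have hΦint : IntegrableOn Φ (Ioi (0:ℝ)) := by
    apply Integrable.add
    apply Integrable.add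
    · exact hint1.const_mul _
    · exact hint2.const_mul _
    · exact hint3.const_mul _
  -- apply monotonicity
  have hmono := integral_mono_of_nonneg
    (f := fun x : ℝ => |deriv (fun τ => ω τ ^ ν τ / Real.Gamma (ν τ) * x ^ (-(ν τ + 1)) *
        Real.exp (-ω τ / x)) t|)
    (g := Φ) (μ := volume.restrict (Ioi (0:ℝ)))
    (Filter.Eventually.of_forall fun x => abs_nonneg _) hΦint
    ((ae_restrict_iff' measurableSet_Ioi).2 (Filter.Eventually.of_forall hbound))
  refine hmono.trans ?_
  -- compute ∫ Φ
  have hΦval : ∫ x in Ioi (0:ℝ), Φ x =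
      C * K0 * (Real.Gamma a / b ^ a) + C * K1 * (Real.Gamma (a + 1) / b ^ (a + 1)) +
      C * |p| * (Real.Gamma (a - 1) / b ^ (a - 1)) := by
    simp only [hΦ_def]
    rw [integral_add (by exact (hint1.const_mul _).add (hint2.const_mul _))
      (hint3.const_mul _),
      integral_add (hint1.const_mul _) (hint2.const_mul _),
      integral_const_mul, integral_const_mul, integral_const_mul,
      invGamma_integral ha0 hb, invGamma_integral ha2 hb, invGamma_integral ha1 hb]
  rw [hΦval]
  -- final algebra
  have hg1 : Real.Gamma (a + 1) = a * Real.Gamma a := Real.Gamma_add_one ha0.ne'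
  have hg2 : Real.Gamma a = (a - 1) * Real.Gamma (a - 1) := by
    have h := Real.Gamma_add_one ha1.ne'
    rw [sub_add_cancel] at h
    rw [h]
  have hb1 : b ^ (a + 1) = b ^ a * b := Real.rpow_add_one hb.ne' a
  have hb2 : b ^ (a - 1) = b ^ a / b := by
    rw [Real.rpow_sub hb, Real.rpow_one]
  have hΓ1pos : 0 < Real.Gamma (a - 1) := Real.Gamma_pos_of_pos ha1
  have hbapos : 0 < b ^ a := Real.rpow_pos_of_pos hb a
  have h1 : C * (Real.Gamma a / b ^ a) = 1 := by
    rw [hC_def]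
    field_simp
  have h2 : C * (Real.Gamma (a + 1) / b ^ (a + 1)) = a / b := by
    rw [hC_def, hg1, hb1]
    field_simp
  have h3 : C * (Real.Gamma (a - 1) / b ^ (a - 1)) = b / (a - 1) := by
    rw [hC_def, hb2]
    rw [hg2]
    field_simp
  have hLM : |Real.log (ω t) - digamma (ν t)| = |L| := rfl
  rw [hLM]
  have hrw : C * K0 * (Real.Gamma a / b ^ a) + C * K1 * (Real.Gamma (a + 1) / b ^ (a + 1)) +
      C * |p| * (Real.Gamma (a - 1) / b ^ (a - 1)) =
      K0 * (C * (Real.Gamma a / b ^ a)) + K1 * (C * (Real.Gamma (a + 1) / b ^ (a + 1))) +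
      |p| * (C * (Real.Gamma (a - 1) / b ^ (a - 1))) := by ring
  rw [hrw, h1, h2, h3, hK0_def, hK1_def]
  have : (|p| * (|L| + 1) + |q| * (a / b)) * 1 + (|p| / Real.exp 1 + |q|) * (a / b) +
      |p| * (b / (a - 1)) = |p| * (|L| + 1 + a / (Real.exp 1 * b) + b / (a - 1)) +
      |q| * (2 * a / b) := by
    field_simp
    ring
  rw [this]
end

section
/- Let p be a real number with 1/2 < p < 3/2, let a : ℝ → ℝ be continuously differentiable with compact support, and suppose there exists K > 0 with |a(ξ)| ≤ K|ξ| for all ξ ∈ ℝ. Then the Hardy-type inequality ∫_ℝ |ξ|^{2−2p} a'(ξ)² dξ ≥ ((2p−1)²/4) ∫_ℝ |ξ|^{−2p} a(ξ)² dξ holds. -/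
open Real MeasureTheory Set Filter Topology

/-- Integrability helper on the half line. -/
lemma int_helper {r D M : ℝ} (hr : -1 < r) {g : ℝ → ℝ}
    (hg : ContinuousOn g (Set.Ioi (0:ℝ)))
    (hbd : ∀ x ∈ Set.Ioc (0:ℝ) M, |g x| ≤ D * x ^ r)
    (hzero : ∀ x, M < x → g x = 0) :
    IntegrableOn g (Set.Ioi (0:ℝ)) := by
  have h1 : IntegrableOn g (Set.Ioc (0:ℝ) M) := by
    rcases le_or_gt M 0 with hM | hM
    · rw [Set.Ioc_eq_empty (by intro h; exact absurd (h.trans_le hM) (lt_irrefl 0))]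
      exact integrableOn_empty
    have hint : IntegrableOn (fun x => D * x ^ r) (Set.Ioc (0:ℝ) M) := by
      have := (intervalIntegral.intervalIntegrable_rpow' hr (a:=0) (b:=M)).const_mul D
      rwa [intervalIntegrable_iff_integrableOn_Ioc_of_le hM.le] at this
    refine Integrable.mono' hint ?_ ?_
    · exact (hg.mono (fun x hx => hx.1)).aestronglyMeasurable measurableSet_Ioc
    · filter_upwards [ae_restrict_mem measurableSet_Ioc] with x hx
      simpa using hbd x hx
  have h2 : IntegrableOn g (Set.Ioi M) := by
    have : EqOn g 0 (Set.Ioi M) := fun x hx => hzero x hx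
    exact (integrableOn_congr_fun this measurableSet_Ioi).2 (integrableOn_zero)
  have h3 := h1.union h2
  refine h3.mono_set fun x hx => ?_
  rcases le_or_gt x M with h | h
  · exact Or.inl ⟨hx, h⟩
  · exact Or.inr h

lemma hardy_half (p : ℝ) (hp1 : 1 / 2 < p) (hp2 : p < 3 / 2)
    (a : ℝ → ℝ) (ha : ContDiff ℝ 1 a) (hsupp : HasCompactSupport a)
    (K : ℝ) (hbound : ∀ ξ : ℝ, |a ξ| ≤ K * |ξ|) :
    ((2 * p - 1) ^ 2 / 4) * ∫ x in Set.Ioi (0:ℝ), x ^ (-(2 * p)) * a x ^ 2 ≤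
      ∫ x in Set.Ioi (0:ℝ), x ^ (2 - 2 * p) * deriv a x ^ 2 := by
  have hr : (-1:ℝ) < 2 - 2 * p := by linarith
  have hK0 : 0 ≤ K := by
    have := hbound 1; have h0 := abs_nonneg (a 1); simp at this; linarith
  -- support radius
  obtain ⟨M0, hM0⟩ := (hsupp.isBounded).subset_closedBall 0
  set M : ℝ := max M0 1 with hMdef
  have hM : (0:ℝ) < M := lt_of_lt_of_le one_pos (le_max_right _ _)
  have hax : ∀ x : ℝ, M < |x| → a x = 0 := by
    intro x hx
    apply image_eq_zero_of_notMem_tsupport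
    intro hmem
    have := hM0 hmem
    rw [Metric.mem_closedBall, Real.dist_eq, sub_zero] at this
    have : |x| ≤ M := this.trans (le_max_left _ _)
    linarith
  have hdx : ∀ x : ℝ, M < |x| → deriv a x = 0 := by
    intro x hx
    by_contra hne
    have := hM0 (support_deriv_subset (Function.mem_support.2 hne))
    rw [Metric.mem_closedBall, Real.dist_eq, sub_zero] at this
    have : |x| ≤ M := this.trans (le_max_left _ _)
    linarith
  -- bound on deriv
  have hderivcont : Continuous (deriv a) := ha.continuous_deriv le_rfl
  obtain ⟨C, hC⟩ := hderivcont.bounded_above_of_compact_support hsupp.deriv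
  have hC0 : 0 ≤ C := le_trans (norm_nonneg _) (hC 0)
  have hCabs : ∀ x, |deriv a x| ≤ C := fun x => hC x
  -- continuity facts
  have hrpow_cont : ∀ c : ℝ, ContinuousOn (fun x : ℝ => x ^ c) (Set.Ioi (0:ℝ)) := by
    intro c x hx
    exact (Real.continuousAt_rpow_const x c (Or.inl (ne_of_gt hx))).continuousWithinAt
  have hacont : Continuous a := ha.continuous
  -- rpow algebra
  have hpow2 : ∀ x : ℝ, 0 < x → x ^ (-(2*p)) * x ^ 2 = x ^ (2 - 2*p) := by
    intro x hx
    rw [← Real.rpow_natCast x 2, ← Real.rpow_add hx]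
    ring_nf
  have hpow1 : ∀ x : ℝ, 0 < x → x ^ (-(2*p)) * x = x ^ (1 - 2*p) := by
    intro x hx
    nth_rewrite 2 [← Real.rpow_one x]
    rw [← Real.rpow_add hx]
    ring_nf
  have hpow3 : ∀ x : ℝ, 0 < x → x ^ (1 - 2*p) * x = x ^ (2 - 2*p) := by
    intro x hx
    nth_rewrite 2 [← Real.rpow_one x]
    rw [← Real.rpow_add hx]
    ring_nf
  -- squared bound for a
  have hasq : ∀ x : ℝ, 0 < x → a x ^ 2 ≤ K ^ 2 * x ^ 2 := by
    intro x hx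
    have h1 := hbound x
    rw [abs_of_pos hx] at h1
    nlinarith [abs_nonneg (a x), sq_abs (a x)]
  -- integrabilities
  have I2 : IntegrableOn (fun x => x ^ (-(2*p)) * a x ^ 2) (Set.Ioi (0:ℝ)) := by
    refine int_helper hr (M := M) (D := K^2) ((hrpow_cont _).mul (hacont.continuousOn.pow 2)) ?_ ?_
    · intro x hx
      have hx0 := hx.1
      have ht : (0:ℝ) ≤ x ^ (-(2*p)) := Real.rpow_nonneg hx0.le _
      rw [abs_of_nonneg (mul_nonneg ht (sq_nonneg _))]
      calc x ^ (-(2*p)) * a x ^ 2 ≤ x ^ (-(2*p)) * (K^2 * x^2) := by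
            exact mul_le_mul_of_nonneg_left (hasq x hx0) ht
        _ = K^2 * (x ^ (-(2*p)) * x^2) := by ring
        _ = K^2 * x ^ (2-2*p) := by rw [hpow2 x hx0]
    · intro x hx
      rw [hax x (by rw [abs_of_pos (hM.trans hx)]; exact hx)]
      ring
  have I1 : IntegrableOn (fun x => x ^ (2-2*p) * deriv a x ^ 2) (Set.Ioi (0:ℝ)) := by
    refine int_helper hr (M := M) (D := C^2) ((hrpow_cont _).mul ((hderivcont.continuousOn).pow 2)) ?_ ?_
    · intro x hx
      have hx0 := hx.1
      have ht : (0:ℝ) ≤ x ^ (2-2*p) := Real.rpow_nonneg hx0.le _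
      rw [abs_of_nonneg (mul_nonneg ht (sq_nonneg _))]
      have : deriv a x ^ 2 ≤ C ^ 2 := by nlinarith [hCabs x, abs_nonneg (deriv a x), sq_abs (deriv a x)]
      calc x ^ (2-2*p) * deriv a x ^ 2 ≤ x ^ (2-2*p) * C^2 := mul_le_mul_of_nonneg_left this ht
        _ = C^2 * x ^ (2-2*p) := by ring
    · intro x hx
      rw [hdx x (by rw [abs_of_pos (hM.trans hx)]; exact hx)]
      ring
  have I3 : IntegrableOn (fun x => x ^ (1-2*p) * a x * deriv a x) (Set.Ioi (0:ℝ)) := by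
    refine int_helper hr (M := M) (D := K*C) (((hrpow_cont _).mul hacont.continuousOn).mul hderivcont.continuousOn) ?_ ?_
    · intro x hx
      have hx0 := hx.1
      have ht : (0:ℝ) ≤ x ^ (1-2*p) := Real.rpow_nonneg hx0.le _
      rw [abs_mul, abs_mul, abs_of_nonneg ht]
      calc x ^ (1-2*p) * |a x| * |deriv a x| ≤ x ^ (1-2*p) * (K * x) * C := by
            apply mul_le_mul
            · apply mul_le_mul_of_nonneg_left _ ht
              exact (hbound x).trans_eq (by rw [abs_of_pos hx0])
            · exact hCabs x
            · exact abs_nonneg _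
            · exact mul_nonneg ht (by nlinarith)
        _ = K * C * (x ^ (1-2*p) * x) := by ring
        _ = K * C * x ^ (2-2*p) := by rw [hpow3 x hx0]
    · intro x hx
      rw [hax x (by rw [abs_of_pos (hM.trans hx)]; exact hx)]
      ring
  -- integration by parts
  set G : ℝ → ℝ := fun x => x ^ (1-2*p) * a x ^ 2 with hGdef
  have hG0 : G 0 = 0 := by
    show (0:ℝ) ^ (1-2*p) * a 0 ^ 2 = 0
    rw [Real.zero_rpow (show 1-2*p ≠ 0 by intro h; linarith), zero_mul]
  have hGderiv : ∀ x ∈ Set.Ioi (0:ℝ), HasDerivAt G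
      ((1-2*p) * (x ^ (-(2*p)) * a x ^ 2) + 2 * (x ^ (1-2*p) * a x * deriv a x)) x := by
    intro x hx
    have h1 : HasDerivAt (fun x : ℝ => x ^ (1-2*p)) ((1-2*p) * x ^ (1-2*p-1)) x :=
      Real.hasDerivAt_rpow_const (Or.inl (ne_of_gt hx))
    have h2 : HasDerivAt (fun x : ℝ => a x ^ 2) (2 * a x ^ 1 * deriv a x) x :=
      ((ha.differentiable one_ne_zero).differentiableAt.hasDerivAt).pow 2
    have h3 := h1.mul h2
    have he : 1-2*p-1 = -(2*p) := by ring
    rw [he] at h3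
    exact h3.congr_deriv (by ring)
  have hGcont : ContinuousWithinAt G (Set.Ici (0:ℝ)) 0 := by
    rw [ContinuousWithinAt, hG0]
    apply squeeze_zero_norm' (a := fun x => K^2 * x ^ (3-2*p))
    · filter_upwards [self_mem_nhdsWithin] with x (hx : x ∈ Set.Ici (0:ℝ))
      rcases eq_or_lt_of_le (show (0:ℝ) ≤ x from hx) with h | h
      · rw [← h, hG0, norm_zero]
        positivity
      · have ht : (0:ℝ) ≤ x ^ (1-2*p) := Real.rpow_nonneg h.le _
        rw [Real.norm_eq_abs, hGdef]
        rw [abs_of_nonneg (mul_nonneg ht (sq_nonneg _))]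
        calc x ^ (1-2*p) * a x ^ 2 ≤ x ^ (1-2*p) * (K^2*x^2) :=
              mul_le_mul_of_nonneg_left (hasq x h) ht
          _ = K^2 * (x ^ (1-2*p) * x * x) := by ring
          _ = K^2 * x ^ (3-2*p) := by
              rw [hpow3 x h]
              nth_rewrite 2 [← Real.rpow_one x]
              rw [← Real.rpow_add h]
              ring_nf
    · have hc : ContinuousAt (fun x : ℝ => x ^ (3-2*p)) 0 :=
        Real.continuousAt_rpow_const 0 _ (Or.inr (by linarith))
      have := (hc.tendsto).const_mul (K^2)
      rw [Real.zero_rpow (show 3-2*p ≠ 0 by intro h'; linarith), mul_zero] at this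
      exact this.mono_left nhdsWithin_le_nhds
  have hGtop : Tendsto G atTop (𝓝 0) := by
    apply Tendsto.congr' _ tendsto_const_nhds
    filter_upwards [eventually_gt_atTop M] with x hx
    rw [hGdef]
    simp [hax x (by rw [abs_of_pos (hM.trans hx)]; exact hx)]
  have hG'int : IntegrableOn (fun x =>
      (1-2*p) * (x ^ (-(2*p)) * a x ^ 2) + 2 * (x ^ (1-2*p) * a x * deriv a x)) (Set.Ioi (0:ℝ)) :=
    (I2.const_mul _).add (I3.const_mul 2)
  have hIBP := integral_Ioi_of_hasDerivAt_of_tendsto hGcont hGderiv hG'int hGtop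
  rw [hG0, sub_zero] at hIBP
  rw [integral_add (I2.const_mul _) (I3.const_mul 2),
    integral_const_mul, integral_const_mul] at hIBP
  set B := ∫ x in Set.Ioi (0:ℝ), x ^ (-(2*p)) * a x ^ 2 with hBdef
  set T := ∫ x in Set.Ioi (0:ℝ), x ^ (1-2*p) * a x * deriv a x with hTdef
  set A := ∫ x in Set.Ioi (0:ℝ), x ^ (2-2*p) * deriv a x ^ 2 with hAdef
  -- key nonnegativity
  have key : 0 ≤ ∫ x in Set.Ioi (0:ℝ),
      (x ^ (2-2*p) * deriv a x ^ 2 - (2*p-1) * (x ^ (1-2*p) * a x * deriv a x)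
        + ((2*p-1)/2)^2 * (x ^ (-(2*p)) * a x ^ 2)) := by
    apply setIntegral_nonneg measurableSet_Ioi
    intro x hx
    have hx0 : (0:ℝ) < x := hx
    have e2 := hpow2 x hx0
    have e1 := hpow1 x hx0
    have e3 := hpow3 x hx0
    have iden : x ^ (2-2*p) * deriv a x ^ 2 - (2*p-1) * (x ^ (1-2*p) * a x * deriv a x)
        + ((2*p-1)/2)^2 * (x ^ (-(2*p)) * a x ^ 2)
        = x ^ (-(2*p)) * (x * deriv a x - ((2*p-1)/2) * a x)^2 := by
      rw [← e2, ← e1]; ring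
    rw [iden]
    exact mul_nonneg (Real.rpow_nonneg hx0.le _) (sq_nonneg _)
  have Isub : IntegrableOn (fun x => x ^ (2-2*p) * deriv a x ^ 2
      - (2*p-1) * (x ^ (1-2*p) * a x * deriv a x)) (Set.Ioi (0:ℝ)) :=
    I1.sub (I3.const_mul (2*p-1))
  rw [integral_add Isub (I2.const_mul (((2*p-1)/2)^2)),
    integral_sub I1 (I3.const_mul (2*p-1)), integral_const_mul, integral_const_mul] at key
  have hT : T = ((2*p-1)/2) * B := by linarith
  have hkey2 : A - (2*p-1) * T + ((2*p-1)/2)^2 * B = A - (2*p-1)^2/4 * B := by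
    rw [hT]; ring
  rw [hkey2] at key
  linarith

lemma hardy_I2 (p : ℝ) (hp2 : p < 3 / 2)
    (a : ℝ → ℝ) (ha : ContDiff ℝ 1 a) (hsupp : HasCompactSupport a)
    (K : ℝ) (hbound : ∀ ξ : ℝ, |a ξ| ≤ K * |ξ|) :
    IntegrableOn (fun x => x ^ (-(2 * p)) * a x ^ 2) (Set.Ioi (0:ℝ)) := by
  have hr : (-1:ℝ) < 2 - 2 * p := by linarith
  obtain ⟨M0, hM0⟩ := (hsupp.isBounded).subset_closedBall 0
  set M : ℝ := max M0 1 with hMdef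
  have hM : (0:ℝ) < M := lt_of_lt_of_le one_pos (le_max_right _ _)
  have hax : ∀ x : ℝ, M < |x| → a x = 0 := by
    intro x hx
    apply image_eq_zero_of_notMem_tsupport
    intro hmem
    have := hM0 hmem
    rw [Metric.mem_closedBall, Real.dist_eq, sub_zero] at this
    have : |x| ≤ M := this.trans (le_max_left _ _)
    linarith
  have hrpow_cont : ContinuousOn (fun x : ℝ => x ^ (-(2*p))) (Set.Ioi (0:ℝ)) :=
    fun x hx => (Real.continuousAt_rpow_const x _ (Or.inl (ne_of_gt hx))).continuousWithinAt
  refine int_helper hr (M := M) (D := K^2) (hrpow_cont.mul (ha.continuous.continuousOn.pow 2)) ?_ ?_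
  · intro x hx
    have hx0 := hx.1
    have ht : (0:ℝ) ≤ x ^ (-(2*p)) := Real.rpow_nonneg hx0.le _
    have hasq : a x ^ 2 ≤ K ^ 2 * x ^ 2 := by
      have h1 := hbound x
      rw [abs_of_pos hx0] at h1
      nlinarith [abs_nonneg (a x), sq_abs (a x)]
    rw [abs_of_nonneg (mul_nonneg ht (sq_nonneg _))]
    calc x ^ (-(2*p)) * a x ^ 2 ≤ x ^ (-(2*p)) * (K^2 * x^2) :=
          mul_le_mul_of_nonneg_left hasq ht
      _ = K^2 * (x ^ (-(2*p)) * x^2) := by ring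
      _ = K^2 * x ^ (2-2*p) := by
          rw [← Real.rpow_natCast x 2, ← Real.rpow_add hx0]; ring_nf
  · intro x hx
    rw [hax x (by rw [abs_of_pos (hM.trans hx)]; exact hx)]
    ring

lemma hardy_I1 (p : ℝ) (hp2 : p < 3 / 2)
    (a : ℝ → ℝ) (ha : ContDiff ℝ 1 a) (hsupp : HasCompactSupport a) :
    IntegrableOn (fun x => x ^ (2 - 2 * p) * deriv a x ^ 2) (Set.Ioi (0:ℝ)) := by
  have hr : (-1:ℝ) < 2 - 2 * p := by linarith
  obtain ⟨M0, hM0⟩ := (hsupp.isBounded).subset_closedBall 0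
  set M : ℝ := max M0 1 with hMdef
  have hM : (0:ℝ) < M := lt_of_lt_of_le one_pos (le_max_right _ _)
  have hdx : ∀ x : ℝ, M < |x| → deriv a x = 0 := by
    intro x hx
    by_contra hne
    have := hM0 (support_deriv_subset (Function.mem_support.2 hne))
    rw [Metric.mem_closedBall, Real.dist_eq, sub_zero] at this
    have : |x| ≤ M := this.trans (le_max_left _ _)
    linarith
  have hderivcont : Continuous (deriv a) := ha.continuous_deriv le_rfl
  obtain ⟨C, hC⟩ := hderivcont.bounded_above_of_compact_support hsupp.deriv
  have hrpow_cont : ContinuousOn (fun x : ℝ => x ^ (2-2*p)) (Set.Ioi (0:ℝ)) :=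
    fun x hx => (Real.continuousAt_rpow_const x _ (Or.inl (ne_of_gt hx))).continuousWithinAt
  refine int_helper hr (M := M) (D := C^2) (hrpow_cont.mul (hderivcont.continuousOn.pow 2)) ?_ ?_
  · intro x hx
    have hx0 := hx.1
    have ht : (0:ℝ) ≤ x ^ (2-2*p) := Real.rpow_nonneg hx0.le _
    rw [abs_of_nonneg (mul_nonneg ht (sq_nonneg _))]
    have hd2 : deriv a x ^ 2 ≤ C ^ 2 := by
      nlinarith [hC x, abs_nonneg (deriv a x), sq_abs (deriv a x),
        (Real.norm_eq_abs (deriv a x)) ▸ hC x]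
    calc x ^ (2-2*p) * deriv a x ^ 2 ≤ x ^ (2-2*p) * C^2 := mul_le_mul_of_nonneg_left hd2 ht
      _ = C^2 * x ^ (2-2*p) := by ring
  · intro x hx
    rw [hdx x (by rw [abs_of_pos (hM.trans hx)]; exact hx)]
    ring

/-- Hardy-type coercivity inequality: for `1/2 < p < 3/2` and a `C¹` compactly supported
function `a` with `|a(ξ)| ≤ K|ξ|`, one has
`∫ |ξ|^{2−2p} a'(ξ)² dξ ≥ ((2p−1)²/4) ∫ |ξ|^{−2p} a(ξ)² dξ`. -/
theorem hardy_type_inequality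
    (p : ℝ) (hp1 : 1 / 2 < p) (hp2 : p < 3 / 2)
    (a : ℝ → ℝ) (ha : ContDiff ℝ 1 a) (hsupp : HasCompactSupport a)
    (K : ℝ) (hK : 0 < K) (hbound : ∀ ξ : ℝ, |a ξ| ≤ K * |ξ|) :
    ((2 * p - 1) ^ 2 / 4) * ∫ ξ : ℝ, |ξ| ^ (-(2 * p)) * a ξ ^ 2 ≤
      ∫ ξ : ℝ, |ξ| ^ (2 - 2 * p) * deriv a ξ ^ 2 := by
  -- the reflected function
  set b : ℝ → ℝ := fun x => a (-x) with hbdef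
  have hb : ContDiff ℝ 1 b := ha.comp contDiff_neg
  have hbsupp : HasCompactSupport b := hsupp.comp_homeomorph (Homeomorph.neg ℝ)
  have hbbound : ∀ ξ : ℝ, |b ξ| ≤ K * |ξ| := by
    intro ξ
    have := hbound (-ξ)
    rwa [abs_neg] at this
  have hderivb : ∀ x : ℝ, deriv b x = -deriv a (-x) := fun x => deriv_comp_neg a x
  -- named full-line integrands
  set F2 : ℝ → ℝ := fun ξ => |ξ| ^ (-(2 * p)) * a ξ ^ 2 with hF2def
  set F1 : ℝ → ℝ := fun ξ => |ξ| ^ (2 - 2 * p) * deriv a ξ ^ 2 with hF1def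
  -- integrability on Ioi 0
  have hF2pos : IntegrableOn F2 (Set.Ioi (0:ℝ)) := by
    refine (hardy_I2 p hp2 a ha hsupp K hbound).congr_fun ?_ measurableSet_Ioi
    intro x hx
    simp only [hF2def, abs_of_pos (show (0:ℝ) < x from hx)]
  have hF1pos : IntegrableOn F1 (Set.Ioi (0:ℝ)) := by
    refine (hardy_I1 p hp2 a ha hsupp).congr_fun ?_ measurableSet_Ioi
    intro x hx
    simp only [hF1def, abs_of_pos (show (0:ℝ) < x from hx)]
  -- integrability on Iic 0 via reflection
  have hrefl2 : ∀ x : ℝ, F2 (-x) = |x| ^ (-(2 * p)) * b x ^ 2 := by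
    intro x; simp only [hF2def, hbdef, abs_neg]
  have hrefl1 : ∀ x : ℝ, F1 (-x) = |x| ^ (2 - 2 * p) * deriv b x ^ 2 := by
    intro x; simp only [hF1def, abs_neg, hderivb x, neg_sq]
  have hF2neg : IntegrableOn F2 (Set.Iic (0:ℝ)) := by
    rw [← (Measure.measurePreserving_neg (volume : Measure ℝ)).integrableOn_comp_preimage
      (Homeomorph.neg ℝ).measurableEmbedding]
    simp only [Function.comp_def, neg_preimage, neg_Iic, neg_zero]
    rw [integrableOn_Ici_iff_integrableOn_Ioi]
    refine (hardy_I2 p hp2 b hb hbsupp K hbbound).congr_fun ?_ measurableSet_Ioi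
    intro x hx
    show x ^ (-(2*p)) * b x ^ 2 = F2 (-x)
    rw [hrefl2 x, abs_of_pos (show (0:ℝ) < x from hx)]
  have hF1neg : IntegrableOn F1 (Set.Iic (0:ℝ)) := by
    rw [← (Measure.measurePreserving_neg (volume : Measure ℝ)).integrableOn_comp_preimage
      (Homeomorph.neg ℝ).measurableEmbedding]
    simp only [Function.comp_def, neg_preimage, neg_Iic, neg_zero]
    rw [integrableOn_Ici_iff_integrableOn_Ioi]
    refine (hardy_I1 p hp2 b hb hbsupp).congr_fun ?_ measurableSet_Ioi
    intro x hx
    show x ^ (2-2*p) * deriv b x ^ 2 = F1 (-x)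
    rw [hrefl1 x, abs_of_pos (show (0:ℝ) < x from hx)]
  -- split the integrals
  have hsplit2 : (∫ ξ : ℝ, F2 ξ) = (∫ ξ in Set.Iic (0:ℝ), F2 ξ) + ∫ ξ in Set.Ioi (0:ℝ), F2 ξ :=
    (intervalIntegral.integral_Iic_add_Ioi hF2neg hF2pos).symm
  have hsplit1 : (∫ ξ : ℝ, F1 ξ) = (∫ ξ in Set.Iic (0:ℝ), F1 ξ) + ∫ ξ in Set.Ioi (0:ℝ), F1 ξ :=
    (intervalIntegral.integral_Iic_add_Ioi hF1neg hF1pos).symm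
  -- identify the pieces with rpow integrals
  have e2pos : (∫ ξ in Set.Ioi (0:ℝ), F2 ξ) = ∫ x in Set.Ioi (0:ℝ), x ^ (-(2*p)) * a x ^ 2 := by
    refine setIntegral_congr_fun measurableSet_Ioi ?_
    intro x hx
    simp only [hF2def, abs_of_pos (show (0:ℝ) < x from hx)]
  have e1pos : (∫ ξ in Set.Ioi (0:ℝ), F1 ξ) = ∫ x in Set.Ioi (0:ℝ), x ^ (2-2*p) * deriv a x ^ 2 := by
    refine setIntegral_congr_fun measurableSet_Ioi ?_
    intro x hx
    simp only [hF1def, abs_of_pos (show (0:ℝ) < x from hx)]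
  have e2neg : (∫ ξ in Set.Iic (0:ℝ), F2 ξ) = ∫ x in Set.Ioi (0:ℝ), x ^ (-(2*p)) * b x ^ 2 := by
    rw [show Set.Iic (0:ℝ) = Set.Iic (-(0:ℝ)) by rw [neg_zero], ← integral_comp_neg_Ioi]
    refine setIntegral_congr_fun measurableSet_Ioi ?_
    intro x hx
    show F2 (-x) = x ^ (-(2*p)) * b x ^ 2
    rw [hrefl2 x, abs_of_pos (show (0:ℝ) < x from hx)]
  have e1neg : (∫ ξ in Set.Iic (0:ℝ), F1 ξ) = ∫ x in Set.Ioi (0:ℝ), x ^ (2-2*p) * deriv b x ^ 2 := by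
    rw [show Set.Iic (0:ℝ) = Set.Iic (-(0:ℝ)) by rw [neg_zero], ← integral_comp_neg_Ioi]
    refine setIntegral_congr_fun measurableSet_Ioi ?_
    intro x hx
    show F1 (-x) = x ^ (2-2*p) * deriv b x ^ 2
    rw [hrefl1 x, abs_of_pos (show (0:ℝ) < x from hx)]
  -- half line inequalities
  have h1 := hardy_half p hp1 hp2 a ha hsupp K hbound
  have h2 := hardy_half p hp1 hp2 b hb hbsupp K hbbound
  calc ((2 * p - 1) ^ 2 / 4) * ∫ ξ : ℝ, F2 ξ
      = ((2 * p - 1) ^ 2 / 4) * (∫ x in Set.Ioi (0:ℝ), x ^ (-(2*p)) * b x ^ 2)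
        + ((2 * p - 1) ^ 2 / 4) * (∫ x in Set.Ioi (0:ℝ), x ^ (-(2*p)) * a x ^ 2) := by
        rw [hsplit2, e2neg, e2pos]; ring
    _ ≤ (∫ x in Set.Ioi (0:ℝ), x ^ (2-2*p) * deriv b x ^ 2)
        + ∫ x in Set.Ioi (0:ℝ), x ^ (2-2*p) * deriv a x ^ 2 := add_le_add h2 h1
    _ = ∫ ξ : ℝ, F1 ξ := by rw [hsplit1, e1neg, e1pos]
end

section
/- Let u₀ : (0,∞) → ℝ be continuous with compact support contained in (0,∞), and define u(x,t) = ∫₀^∞ (1/z) u₀(x/z) L_t(z) dz for x > 0, t > 0, where L_t(x) = (4πt)^{−1/2} x^{−1} exp(−(log x + t)²/(4t)). Then u is twice continuously differentiable in x and continuously differentiable in t on (0,∞) × (0,∞), and it solves the geometric Brownian motion equation ∂_t u(x,t) = ∂²_x (x² u(x,t)) for all x > 0 and t > 0. -/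
open Real MeasureTheory Set Metric

/-- The lognormal density `L_t(x) = (4πt)^{−1/2} x⁻¹ exp(−(log x + t)²/(4t))`. -/
noncomputable def lognormalDensity (t x : ℝ) : ℝ :=
  (4 * Real.pi * t) ^ (-(1:ℝ) / 2) * x⁻¹ * Real.exp (-(Real.log x + t) ^ 2 / (4 * t))

/-! ### Auxiliary kernel functions and their derivatives -/

noncomputable def Pfun (t z : ℝ) : ℝ := -(z⁻¹) * (1 + (Real.log z + t) / (2 * t))
noncomputable def Lone (t z : ℝ) : ℝ := lognormalDensity t z * Pfun t z
noncomputable def Ltwo (t z : ℝ) : ℝ :=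
  lognormalDensity t z *
    ((Pfun t z) ^ 2 + (z⁻¹) ^ 2 * (1 + (Real.log z + t) / (2 * t) - 1 / (2 * t)))
noncomputable def Qfun (t z : ℝ) : ℝ := z ^ 2 * lognormalDensity t z
noncomputable def Qq (t z : ℝ) : ℝ := z⁻¹ * (1 - (Real.log z + t) / (2 * t))
noncomputable def Qone (t z : ℝ) : ℝ := Qfun t z * Qq t z
noncomputable def Bfun (t z : ℝ) : ℝ :=
  (Real.log z + t) ^ 2 / (4 * t ^ 2) - (Real.log z + t) / (2 * t) - 1 / (2 * t)
noncomputable def Qtwo (t z : ℝ) : ℝ := lognormalDensity t z * Bfun t z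

lemma hasDerivAt_expfactor {t z : ℝ} (ht : t ≠ 0) (hz : z ≠ 0) :
    HasDerivAt (fun z => Real.exp (-(Real.log z + t) ^ 2 / (4 * t)))
      (Real.exp (-(Real.log z + t) ^ 2 / (4 * t)) * (-(Real.log z + t) / (2 * t) * z⁻¹)) z := by
  have h1 : HasDerivAt (fun z => -(Real.log z + t) ^ 2 / (4 * t))
      (-(Real.log z + t) / (2 * t) * z⁻¹) z := by
    have hlog : HasDerivAt (fun z => Real.log z + t) z⁻¹ z :=
      (Real.hasDerivAt_log hz).add_const t
    have := ((hlog.pow 2).neg).div_const (4 * t)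
    refine this.congr_deriv ?_
    field_simp
    ring
  exact h1.exp

lemma hasDerivAt_L {t z : ℝ} (ht : t ≠ 0) (hz : z ≠ 0) :
    HasDerivAt (fun z => lognormalDensity t z) (Lone t z) z := by
  have hinv : HasDerivAt (fun z : ℝ => z⁻¹) (-(z^2)⁻¹) z := hasDerivAt_inv hz
  have := ((hinv.const_mul ((4 * Real.pi * t) ^ (-(1:ℝ) / 2))).mul (hasDerivAt_expfactor ht hz))
  refine this.congr_deriv ?_
  unfold Lone lognormalDensity Pfun
  field_simp
  ring

lemma hasDerivAt_P {t z : ℝ} (ht : t ≠ 0) (hz : z ≠ 0) :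
    HasDerivAt (fun z => Pfun t z)
      ((z⁻¹) ^ 2 * (1 + (Real.log z + t) / (2 * t) - 1 / (2 * t))) z := by
  have hinv : HasDerivAt (fun z : ℝ => -(z⁻¹)) (-(-(z^2)⁻¹)) z := (hasDerivAt_inv hz).neg
  have hlog : HasDerivAt (fun z => 1 + (Real.log z + t) / (2 * t)) (z⁻¹ / (2 * t)) z := by
    have := (((Real.hasDerivAt_log hz).add_const t).div_const (2 * t)).const_add 1
    convert this using 1
  have := hinv.mul hlog
  refine this.congr_deriv ?_
  field_simp
  ring

lemma hasDerivAt_L1 {t z : ℝ} (ht : t ≠ 0) (hz : z ≠ 0) :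
    HasDerivAt (fun z => Lone t z) (Ltwo t z) z := by
  have := (hasDerivAt_L ht hz).mul (hasDerivAt_P ht hz)
  refine this.congr_deriv ?_
  unfold Ltwo Lone
  ring

lemma hasDerivAt_Q {t z : ℝ} (ht : t ≠ 0) (hz : z ≠ 0) :
    HasDerivAt (fun z => Qfun t z) (Qone t z) z := by
  have := (hasDerivAt_pow 2 z).mul (hasDerivAt_L ht hz)
  refine this.congr_deriv ?_
  unfold Qone Qfun Qq Lone Pfun lognormalDensity
  field_simp
  ring

lemma hasDerivAt_Qq {t z : ℝ} (ht : t ≠ 0) (hz : z ≠ 0) :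
    HasDerivAt (fun z => Qq t z)
      (-(z⁻¹)^2 * (1 - (Real.log z + t) / (2 * t) + 1 / (2 * t))) z := by
  have hinv : HasDerivAt (fun z : ℝ => z⁻¹) (-(z^2)⁻¹) z := hasDerivAt_inv hz
  have hlog : HasDerivAt (fun z => 1 - (Real.log z + t) / (2 * t)) (-(z⁻¹ / (2 * t))) z := by
    have := (((Real.hasDerivAt_log hz).add_const t).div_const (2 * t)).const_sub 1
    convert this using 1
  have := hinv.mul hlog
  refine this.congr_deriv ?_
  field_simp
  ring

lemma hasDerivAt_Q1 {t z : ℝ} (ht : t ≠ 0) (hz : z ≠ 0) :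
    HasDerivAt (fun z => Qone t z) (Qtwo t z) z := by
  have := (hasDerivAt_Q ht hz).mul (hasDerivAt_Qq ht hz)
  refine this.congr_deriv ?_
  unfold Qtwo Qone Qfun Qq Bfun
  field_simp
  ring

lemma hasDerivAt_Lt {t z : ℝ} (ht : 0 < t) (hz : z ≠ 0) :
    HasDerivAt (fun τ => lognormalDensity τ z) (Qtwo t z) t := by
  have hpos : (0:ℝ) < 4 * Real.pi * t := by positivity
  have hA : HasDerivAt (fun τ : ℝ => (4 * Real.pi * τ) ^ (-(1:ℝ) / 2))
      ((-(1:ℝ)/2) * (4 * Real.pi * t) ^ ((-(1:ℝ)/2) - 1) * (4 * Real.pi)) t := by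
    have h1 : HasDerivAt (fun τ : ℝ => 4 * Real.pi * τ) (4 * Real.pi) t := by
      simpa using (hasDerivAt_id t).const_mul (4 * Real.pi)
    have h2 := (Real.hasDerivAt_rpow_const (x := 4 * Real.pi * t) (p := -(1:ℝ)/2)
      (Or.inl hpos.ne')).comp t h1
    exact h2
  have hB : HasDerivAt (fun τ : ℝ => -(Real.log z + τ) ^ 2 / (4 * τ))
      ((-(2 * (Real.log z + t)) * (4 * t) - (-(Real.log z + t) ^ 2) * 4) / (4 * t) ^ 2) t := by
    have hnum : HasDerivAt (fun τ : ℝ => -(Real.log z + τ) ^ 2) (-(2 * (Real.log z + t))) t := by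
      have := (((hasDerivAt_id t).const_add (Real.log z)).pow 2).neg
      refine this.congr_deriv ?_
      simp
    have hden : HasDerivAt (fun τ : ℝ => 4 * τ) 4 t := by
      simpa using (hasDerivAt_id t).const_mul 4
    exact hnum.div hden (by positivity)
  have := ((hA.mul_const z⁻¹).mul hB.exp)
  refine this.congr_deriv ?_
  have hr : (4 * Real.pi * t) ^ ((-(1:ℝ)/2) - 1)
      = (4 * Real.pi * t) ^ (-(1:ℝ)/2) / (4 * Real.pi * t) := by
    rw [Real.rpow_sub hpos, Real.rpow_one]
  rw [hr]
  unfold Qtwo lognormalDensity Bfun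
  have hπ : Real.pi ≠ 0 := Real.pi_ne_zero
  field_simp
  ring

/-! ### Continuity of the kernel functions -/

lemma contAt_L2 {t z : ℝ} (ht : 0 < t) (hz : z ≠ 0) :
    ContinuousAt (fun q : ℝ × ℝ => lognormalDensity q.1 q.2) (t, z) := by
  have h1 : ContinuousAt (fun q : ℝ × ℝ => (4 * Real.pi * q.1) ^ (-(1:ℝ) / 2)) (t, z) := by
    exact ContinuousAt.comp (g := fun y : ℝ => y ^ (-(1:ℝ)/2))
      (Real.continuousAt_rpow_const _ _ (Or.inl (by positivity))) (by fun_prop)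
  have h2 : ContinuousAt (fun q : ℝ × ℝ => (q.2)⁻¹) (t, z) := by fun_prop (disch := assumption)
  have hlog : ContinuousAt (fun q : ℝ × ℝ => Real.log q.2) (t, z) :=
    (Real.continuousAt_log hz).comp (f := fun q : ℝ × ℝ => q.2) (x := (t, z)) (by fun_prop)
  have h3 : ContinuousAt
      (fun q : ℝ × ℝ => Real.exp (-(Real.log q.2 + q.1) ^ 2 / (4 * q.1))) (t, z) := by
    apply ContinuousAt.rexp
    apply ContinuousAt.div (by fun_prop) (by fun_prop)
    positivity
  exact (h1.mul h2).mul h3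

lemma contAt_B2 {t z : ℝ} (ht : t ≠ 0) (hz : z ≠ 0) :
    ContinuousAt (fun q : ℝ × ℝ => Bfun q.1 q.2) (t, z) := by
  have hlog : ContinuousAt (fun q : ℝ × ℝ => Real.log q.2) (t, z) :=
    (Real.continuousAt_log hz).comp (f := fun q : ℝ × ℝ => q.2) (x := (t, z)) (by fun_prop)
  unfold Bfun
  apply ContinuousAt.sub
  apply ContinuousAt.sub
  · exact ContinuousAt.div (by fun_prop) (by fun_prop) (by simpa using pow_ne_zero 2 ht)
  · exact ContinuousAt.div (by fun_prop) (by fun_prop) (by simpa using ht)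
  · exact ContinuousAt.div (by fun_prop) (by fun_prop) (by simpa using ht)

lemma contAt_Qtwo2 {t z : ℝ} (ht : 0 < t) (hz : z ≠ 0) :
    ContinuousAt (fun q : ℝ × ℝ => Qtwo q.1 q.2) (t, z) :=
  (contAt_L2 ht hz).mul (contAt_B2 ht.ne' hz)

lemma contAt_L {t z : ℝ} (ht : 0 < t) (hz : z ≠ 0) :
    ContinuousAt (lognormalDensity t) z :=
  (contAt_L2 ht hz).comp (f := fun z : ℝ => (t, z)) (by fun_prop)

lemma contAt_P {t z : ℝ} (ht : t ≠ 0) (hz : z ≠ 0) : ContinuousAt (Pfun t) z := by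
  unfold Pfun
  have hlog := Real.continuousAt_log hz
  apply ContinuousAt.mul (by fun_prop (disch := assumption))
  exact (ContinuousAt.div (by fun_prop) (by fun_prop) (by simpa using ht)).const_add 1

lemma contAt_Lone {t z : ℝ} (ht : 0 < t) (hz : z ≠ 0) : ContinuousAt (Lone t) z :=
  (contAt_L ht hz).mul (contAt_P ht.ne' hz)

lemma contAt_Ltwo {t z : ℝ} (ht : 0 < t) (hz : z ≠ 0) : ContinuousAt (Ltwo t) z := by
  unfold Ltwo
  apply (contAt_L ht hz).mul
  apply ContinuousAt.add ((contAt_P ht.ne' hz).pow 2)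
  apply ContinuousAt.mul (by fun_prop (disch := assumption))
  have hlog := Real.continuousAt_log hz
  apply ContinuousAt.sub
  exact (ContinuousAt.div (by fun_prop) (by fun_prop) (by simpa using ht.ne')).const_add 1
  fun_prop

lemma contAt_Qfun {t z : ℝ} (ht : 0 < t) (hz : z ≠ 0) : ContinuousAt (Qfun t) z :=
  ((continuous_pow 2).continuousAt).mul (contAt_L ht hz)

lemma contAt_Qq {t z : ℝ} (ht : t ≠ 0) (hz : z ≠ 0) : ContinuousAt (Qq t) z := by
  unfold Qq
  have hlog := Real.continuousAt_log hz
  apply ContinuousAt.mul (by fun_prop (disch := assumption))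
  exact (ContinuousAt.div (by fun_prop) (by fun_prop) (by simpa using ht)).const_sub 1

lemma contAt_Qone {t z : ℝ} (ht : 0 < t) (hz : z ≠ 0) : ContinuousAt (Qone t) z :=
  (contAt_Qfun ht hz).mul (contAt_Qq ht.ne' hz)

lemma contAt_Qtwo {t z : ℝ} (ht : 0 < t) (hz : z ≠ 0) : ContinuousAt (Qtwo t) z :=
  (contAt_Qtwo2 ht hz).comp (f := fun z : ℝ => (t, z)) (by fun_prop)

/-! ### Generic parametric-integral lemmas -/

lemma aux_meas {F : ℝ → ℝ → ℝ} {a b p₀ ε : ℝ}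
    (hF : ContinuousOn (fun q : ℝ × ℝ => F q.1 q.2) (closedBall p₀ ε ×ˢ Icc a b)) :
    ∀ x ∈ closedBall p₀ ε, ContinuousOn (F x) (Icc a b) := by
  intro x hx
  have : ContinuousOn (fun w => (x, w) : ℝ → ℝ × ℝ) (Icc a b) := by fun_prop
  exact hF.comp this (fun w hw => ⟨hx, hw⟩)

lemma paramHasDerivAt {F F' : ℝ → ℝ → ℝ} {a b p₀ ε : ℝ} (hε : 0 < ε)
    (hF : ContinuousOn (fun q : ℝ × ℝ => F q.1 q.2) (closedBall p₀ ε ×ˢ Icc a b))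
    (hF' : ContinuousOn (fun q : ℝ × ℝ => F' q.1 q.2) (closedBall p₀ ε ×ˢ Icc a b))
    (hderiv : ∀ p ∈ ball p₀ ε, ∀ w ∈ Icc a b, HasDerivAt (fun p => F p w) (F' p w) p) :
    HasDerivAt (fun p => ∫ w in Icc a b, F p w) (∫ w in Icc a b, F' p₀ w) p₀ := by
  obtain ⟨C, hC⟩ :=
    ((isCompact_closedBall p₀ ε).prod isCompact_Icc).exists_bound_of_continuousOn hF'
  have hp₀ : p₀ ∈ closedBall p₀ ε := mem_closedBall_self hε.le
  refine (hasDerivAt_integral_of_dominated_loc_of_deriv_le (bound := fun _ => C) (ball_mem_nhds p₀ hε)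
    ?_ ?_ ?_ ?_ ?_ ?_).2
  · filter_upwards [closedBall_mem_nhds p₀ hε] with x hx
    exact (aux_meas hF x hx).aestronglyMeasurable measurableSet_Icc
  · exact (aux_meas hF p₀ hp₀).integrableOn_Icc
  · exact (aux_meas hF' p₀ hp₀).aestronglyMeasurable measurableSet_Icc
  · rw [ae_restrict_iff' measurableSet_Icc]
    exact ae_of_all _ fun w hw x hx => hC (x, w) ⟨ball_subset_closedBall hx, hw⟩
  · exact integrableOn_const measure_Icc_lt_top.ne
  · rw [ae_restrict_iff' measurableSet_Icc]
    exact ae_of_all _ fun w hw x hx => hderiv x hx w hw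

lemma paramContAt {F : ℝ → ℝ → ℝ} {a b p₀ ε : ℝ} (hε : 0 < ε)
    (hF : ContinuousOn (fun q : ℝ × ℝ => F q.1 q.2) (closedBall p₀ ε ×ˢ Icc a b)) :
    ContinuousAt (fun p => ∫ w in Icc a b, F p w) p₀ := by
  obtain ⟨C, hC⟩ :=
    ((isCompact_closedBall p₀ ε).prod isCompact_Icc).exists_bound_of_continuousOn hF
  refine continuousAt_of_dominated (bound := fun _ => C) ?_ ?_ ?_ ?_
  · filter_upwards [closedBall_mem_nhds p₀ hε] with x hx
    exact (aux_meas hF x hx).aestronglyMeasurable measurableSet_Icc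
  · filter_upwards [closedBall_mem_nhds p₀ hε] with x hx
    rw [ae_restrict_iff' measurableSet_Icc]
    exact ae_of_all _ fun w hw => hC (x, w) ⟨hx, hw⟩
  · exact integrableOn_const measure_Icc_lt_top.ne
  · rw [ae_restrict_iff' measurableSet_Icc]
    refine ae_of_all _ fun w hw => ?_
    have : ContinuousOn (fun x => F x w) (closedBall p₀ ε) := by
      have hm : ContinuousOn (fun x => (x, w) : ℝ → ℝ × ℝ) (closedBall p₀ ε) := by fun_prop
      exact hF.comp hm (fun x hx => ⟨hx, hw⟩)
    exact this.continuousAt (closedBall_mem_nhds p₀ hε)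

/-! ### Builders -/

lemma closedBall_pos {x ε q : ℝ} (h : 0 < x - ε) (hq : q ∈ closedBall x ε) : 0 < q := by
  rw [mem_closedBall, Real.dist_eq, abs_le] at hq
  linarith [hq.1]

lemma ball_pos {x ε q : ℝ} (h : 0 ≤ x - ε) (hq : q ∈ ball x ε) : 0 < q := by
  rw [mem_ball, Real.dist_eq, abs_lt] at hq
  linarith [hq.1]

lemma contOn_VG {V G : ℝ → ℝ} {a b x ε : ℝ} (ha : 0 < a) (hx : 0 < x - ε)
    (hV : ∀ w : ℝ, w ≠ 0 → ContinuousAt V w) (hG : ∀ z : ℝ, z ≠ 0 → ContinuousAt G z) :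
    ContinuousOn (fun q : ℝ × ℝ => V q.2 * G (q.1 / q.2)) (closedBall x ε ×ˢ Icc a b) := by
  intro q hq
  have hq1 : 0 < q.1 := closedBall_pos hx hq.1
  have hq2 : 0 < q.2 := lt_of_lt_of_le ha hq.2.1
  apply ContinuousAt.continuousWithinAt
  apply ContinuousAt.mul
  · exact (hV q.2 hq2.ne').comp (by fun_prop)
  · exact (hG _ (by positivity)).comp (f := fun q : ℝ × ℝ => q.1 / q.2)
      (by fun_prop (disch := exact hq2.ne'))

lemma contOn_VG2 {V : ℝ → ℝ} {G2 : ℝ × ℝ → ℝ} {a b x t ε : ℝ} (ha : 0 < a)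
    (ht : 0 < t - ε) (hx : x ≠ 0)
    (hV : ∀ w : ℝ, w ≠ 0 → ContinuousAt V w)
    (hG2 : ∀ τ z : ℝ, 0 < τ → z ≠ 0 → ContinuousAt G2 (τ, z)) :
    ContinuousOn (fun q : ℝ × ℝ => V q.2 * G2 (q.1, x / q.2)) (closedBall t ε ×ˢ Icc a b) := by
  intro q hq
  have hq1 : 0 < q.1 := closedBall_pos ht hq.1
  have hq2 : 0 < q.2 := lt_of_lt_of_le ha hq.2.1
  apply ContinuousAt.continuousWithinAt
  apply ContinuousAt.mul
  · exact (hV q.2 hq2.ne').comp (by fun_prop)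
  · exact (hG2 q.1 (x / q.2) hq1 (by positivity)).comp
      (f := fun q : ℝ × ℝ => (q.1, x / q.2)) (by fun_prop (disch := exact hq2.ne'))

lemma hasDerivAt_VG {G G' : ℝ → ℝ} {w p : ℝ} (hw : w ≠ 0) (c : ℝ)
    (hG : HasDerivAt G (G' (p / w)) (p / w)) :
    HasDerivAt (fun p => c * G (p / w)) (c * w⁻¹ * G' (p / w)) p := by
  have h1 : HasDerivAt (fun p : ℝ => p / w) (1 / w) p := by
    simpa using (hasDerivAt_id p).div_const w
  have := (hG.comp p h1).const_mul c
  refine this.congr_deriv ?_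
  ring

lemma contDiffOn_one_of {f f1 : ℝ → ℝ} {s : Set ℝ} (hs : IsOpen s)
    (h1 : ∀ x ∈ s, HasDerivAt f (f1 x) x) (hc : ContinuousOn f1 s) :
    ContDiffOn ℝ 1 f s := by
  rw [show (1 : WithTop ℕ∞) = (0 : ℕ) + 1 by norm_num,
    contDiffOn_succ_iff_deriv_of_isOpen hs]
  refine ⟨fun x hx => (h1 x hx).differentiableAt.differentiableWithinAt, by simp, ?_⟩
  simp only [Nat.cast_zero, contDiffOn_zero]
  exact hc.congr fun x hx => (h1 x hx).deriv

lemma contDiffOn_two_of {f f1 f2 : ℝ → ℝ} {s : Set ℝ} (hs : IsOpen s)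
    (h1 : ∀ x ∈ s, HasDerivAt f (f1 x) x) (h2 : ∀ x ∈ s, HasDerivAt f1 (f2 x) x)
    (hc : ContinuousOn f2 s) : ContDiffOn ℝ 2 f s := by
  rw [show (2 : WithTop ℕ∞) = (1 : ℕ) + 1 by norm_num,
    contDiffOn_succ_iff_deriv_of_isOpen hs]
  refine ⟨fun x hx => (h1 x hx).differentiableAt.differentiableWithinAt, by simp, ?_⟩
  have := contDiffOn_one_of hs h2 hc
  exact (this.congr fun x hx => (h1 x hx).deriv : ContDiffOn ℝ ((1:ℕ) : WithTop ℕ∞) _ s)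

/-! ### Reduction of the integral -/

lemma subst_lemma (u₀ : ℝ → ℝ) {x : ℝ} (hx : 0 < x) (t : ℝ) :
    (∫ z in Ioi (0:ℝ), (1 / z) * u₀ (x / z) * lognormalDensity t z)
      = ∫ w in Ioi (0:ℝ), (1 / w) * u₀ w * lognormalDensity t (x / w) := by
  have himg : (fun w => x / w) '' Ioi (0:ℝ) = Ioi 0 := by
    ext z
    constructor
    · rintro ⟨w, hw, rfl⟩
      exact div_pos hx hw
    · intro hz
      exact ⟨x / z, div_pos hx hz, by field_simp⟩
  have hd : ∀ w ∈ Ioi (0:ℝ), HasDerivWithinAt (fun w => x / w) (-(x / w ^ 2)) (Ioi 0) w := by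
    intro w hw
    have := ((hasDerivAt_inv (ne_of_gt hw)).const_mul x).hasDerivWithinAt (s := Ioi (0:ℝ))
    refine this.congr_deriv ?_
    field_simp
  have hinj : InjOn (fun w => x / w) (Ioi (0:ℝ)) := by
    intro w1 h1 w2 h2 h
    simp only [] at h
    rw [div_eq_div_iff h1.ne' h2.ne'] at h
    exact (mul_left_cancel₀ hx.ne' h.symm)
  have := integral_image_eq_integral_abs_deriv_smul measurableSet_Ioi hd hinj
    (fun z => (1 / z) * u₀ (x / z) * lognormalDensity t z)
  conv_lhs => rw [← himg]
  rw [this]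
  apply setIntegral_congr_fun measurableSet_Ioi
  intro w hw
  have hw0 : (0:ℝ) < w := hw
  have habs : |(-(x / w ^ 2))| = x / w ^ 2 := by
    rw [abs_neg, abs_of_pos (by positivity)]
  simp only [smul_eq_mul]
  rw [habs]
  have hxw : x / (x / w) = w := by field_simp
  rw [hxw]
  field_simp

lemma restrict_lemma (u₀ : ℝ → ℝ) {a b : ℝ} (ha : 0 < a) (hK : tsupport u₀ ⊆ Icc a b)
    (V g : ℝ → ℝ) :
    (∫ w in Ioi (0:ℝ), V w * u₀ w * g w) = ∫ w in Icc a b, V w * u₀ w * g w := by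
  apply setIntegral_eq_of_subset_of_forall_diff_eq_zero measurableSet_Ioi
  · intro w hw
    exact lt_of_lt_of_le ha hw.1
  · intro w hw
    have : u₀ w = 0 := image_eq_zero_of_notMem_tsupport (fun hm => hw.2 (hK hm))
    simp [this]

lemma exists_ab {u₀ : ℝ → ℝ} (hsupp : HasCompactSupport u₀)
    (hpos : tsupport u₀ ⊆ Ioi 0) : ∃ a b : ℝ, 0 < a ∧ tsupport u₀ ⊆ Icc a b := by
  by_cases hne : (tsupport u₀).Nonempty
  · obtain ⟨A, hA⟩ := hsupp.exists_isLeast hne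
    obtain ⟨B, hB⟩ := hsupp.exists_isGreatest hne
    exact ⟨A, B, hpos hA.1, fun w hw => ⟨hA.2 hw, hB.2 hw⟩⟩
  · exact ⟨1, 1, one_pos, by simp [not_nonempty_iff_eq_empty.1 hne]⟩

/-! ### Main theorem -/

/-- The multiplicative convolution `u(x,t) = ∫₀^∞ (1/z) u₀(x/z) L_t(z) dz` of a continuous
initial datum with compact support contained in `(0,∞)` is `C²` in `x`, `C¹` in `t`, and
solves the geometric Brownian motion equation `∂ₜ u = ∂²ₓ(x² u)` on `(0,∞) × (0,∞)`. -/
theorem lognormal_convolution_solves_gbm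
    (u₀ : ℝ → ℝ) (hcont : Continuous u₀) (hsupp : HasCompactSupport u₀)
    (hsupp_pos : tsupport u₀ ⊆ Set.Ioi 0) :
    (∀ t > (0:ℝ), ContDiffOn ℝ 2
        (fun x => ∫ z in Set.Ioi (0:ℝ), (1 / z) * u₀ (x / z) * lognormalDensity t z)
        (Set.Ioi 0)) ∧
    (∀ x > (0:ℝ), ContDiffOn ℝ 1
        (fun t => ∫ z in Set.Ioi (0:ℝ), (1 / z) * u₀ (x / z) * lognormalDensity t z)
        (Set.Ioi 0)) ∧
    (∀ x > (0:ℝ), ∀ t > (0:ℝ),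
      deriv (fun τ => ∫ z in Set.Ioi (0:ℝ), (1 / z) * u₀ (x / z) * lognormalDensity τ z) t =
        deriv (deriv (fun y =>
          y ^ 2 * ∫ z in Set.Ioi (0:ℝ), (1 / z) * u₀ (y / z) * lognormalDensity t z)) x) := by
  obtain ⟨a, b, ha, hK⟩ := exists_ab hsupp hsupp_pos
  -- reduction of the integral
  have hkey : ∀ t : ℝ, ∀ x : ℝ, 0 < x →
      (∫ z in Ioi (0:ℝ), (1 / z) * u₀ (x / z) * lognormalDensity t z)
        = ∫ w in Icc a b, (1 / w) * u₀ w * lognormalDensity t (x / w) :=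
    fun t x hx => (subst_lemma u₀ hx t).trans
      (restrict_lemma u₀ ha hK (fun w => 1 / w) (fun w => lognormalDensity t (x / w)))
  -- continuity of the `V` factors
  have hV1 : ∀ w : ℝ, w ≠ 0 → ContinuousAt (fun w => 1 / w * u₀ w) w := by
    intro w hw; fun_prop (disch := assumption)
  have hV2 : ∀ w : ℝ, w ≠ 0 → ContinuousAt (fun w => 1 / w * u₀ w * w⁻¹) w := by
    intro w hw; fun_prop (disch := assumption)
  have hV3 : ∀ w : ℝ, w ≠ 0 → ContinuousAt (fun w => 1 / w * u₀ w * w⁻¹ * w⁻¹) w := by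
    intro w hw; fun_prop (disch := assumption)
  have hW1 : ∀ w : ℝ, w ≠ 0 → ContinuousAt (fun w => w * u₀ w) w := by
    intro w hw; fun_prop
  have hW2 : ∀ w : ℝ, w ≠ 0 → ContinuousAt (fun w => w * u₀ w * w⁻¹) w := by
    intro w hw; fun_prop (disch := assumption)
  have hW3 : ∀ w : ℝ, w ≠ 0 → ContinuousAt (fun w => w * u₀ w * w⁻¹ * w⁻¹) w := by
    intro w hw; fun_prop (disch := assumption)
  -- spatial derivatives of the (reduced) convolution, fixed t > 0
  have hD1 : ∀ t : ℝ, 0 < t → ∀ x ∈ Ioi (0:ℝ),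
      HasDerivAt (fun x => ∫ w in Icc a b, 1 / w * u₀ w * lognormalDensity t (x / w))
        (∫ w in Icc a b, 1 / w * u₀ w * w⁻¹ * Lone t (x / w)) x := by
    intro t ht x hx
    have hx0 : (0:ℝ) < x := hx
    refine paramHasDerivAt (ε := x / 2)
      (F := fun p w => 1 / w * u₀ w * lognormalDensity t (p / w))
      (F' := fun p w => 1 / w * u₀ w * w⁻¹ * Lone t (p / w)) (by linarith)
      (contOn_VG (x := x) (ε := x / 2) ha (by linarith) hV1 (fun z hz => contAt_L ht hz))
      (contOn_VG (x := x) (ε := x / 2) ha (by linarith) hV2 (fun z hz => contAt_Lone ht hz)) ?_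
    intro p hp w hw
    have hp0 : 0 < p := ball_pos (by linarith) hp
    have hw0 : 0 < w := lt_of_lt_of_le ha hw.1
    exact hasDerivAt_VG hw0.ne' _ (hasDerivAt_L ht.ne' (by positivity))
  have hD2 : ∀ t : ℝ, 0 < t → ∀ x ∈ Ioi (0:ℝ),
      HasDerivAt (fun x => ∫ w in Icc a b, 1 / w * u₀ w * w⁻¹ * Lone t (x / w))
        (∫ w in Icc a b, 1 / w * u₀ w * w⁻¹ * w⁻¹ * Ltwo t (x / w)) x := by
    intro t ht x hx
    have hx0 : (0:ℝ) < x := hx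
    refine paramHasDerivAt (ε := x / 2)
      (F := fun p w => 1 / w * u₀ w * w⁻¹ * Lone t (p / w))
      (F' := fun p w => 1 / w * u₀ w * w⁻¹ * w⁻¹ * Ltwo t (p / w)) (by linarith)
      (contOn_VG (x := x) (ε := x / 2) ha (by linarith) hV2 (fun z hz => contAt_Lone ht hz))
      (contOn_VG (x := x) (ε := x / 2) ha (by linarith) hV3 (fun z hz => contAt_Ltwo ht hz)) ?_
    intro p hp w hw
    have hp0 : 0 < p := ball_pos (by linarith) hp
    have hw0 : 0 < w := lt_of_lt_of_le ha hw.1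
    exact hasDerivAt_VG hw0.ne' _ (hasDerivAt_L1 ht.ne' (by positivity))
  have hC2 : ∀ t : ℝ, 0 < t → ContinuousOn
      (fun x => ∫ w in Icc a b, 1 / w * u₀ w * w⁻¹ * w⁻¹ * Ltwo t (x / w)) (Ioi 0) := by
    intro t ht x hx
    have hx0 : (0:ℝ) < x := hx
    exact (paramContAt (ε := x / 2)
      (F := fun p w => 1 / w * u₀ w * w⁻¹ * w⁻¹ * Ltwo t (p / w)) (by linarith)
      (contOn_VG (x := x) (ε := x / 2) ha (by linarith) hV3
        (fun z hz => contAt_Ltwo ht hz))).continuousWithinAt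
  -- time derivative, fixed x > 0
  have hDT : ∀ x : ℝ, 0 < x → ∀ t ∈ Ioi (0:ℝ),
      HasDerivAt (fun t => ∫ w in Icc a b, 1 / w * u₀ w * lognormalDensity t (x / w))
        (∫ w in Icc a b, 1 / w * u₀ w * Qtwo t (x / w)) t := by
    intro x hx t ht
    have ht0 : (0:ℝ) < t := ht
    refine paramHasDerivAt (ε := t / 2)
      (F := fun τ w => 1 / w * u₀ w * lognormalDensity τ (x / w))
      (F' := fun τ w => 1 / w * u₀ w * Qtwo τ (x / w)) (by linarith)
      (contOn_VG2 (t := t) (ε := t / 2) ha (by linarith) hx.ne' hV1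
        (fun τ z hτ hz => contAt_L2 hτ hz))
      (contOn_VG2 (t := t) (ε := t / 2) ha (by linarith) hx.ne' hV1
        (fun τ z hτ hz => contAt_Qtwo2 hτ hz)) ?_
    intro τ hτ w hw
    have hτ0 : 0 < τ := ball_pos (by linarith) hτ
    have hw0 : 0 < w := lt_of_lt_of_le ha hw.1
    exact (hasDerivAt_Lt hτ0 (by positivity)).const_mul _
  have hCT : ∀ x : ℝ, 0 < x → ContinuousOn
      (fun t => ∫ w in Icc a b, 1 / w * u₀ w * Qtwo t (x / w)) (Ioi 0) := by
    intro x hx t ht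
    have ht0 : (0:ℝ) < t := ht
    exact (paramContAt (ε := t / 2)
      (F := fun τ w => 1 / w * u₀ w * Qtwo τ (x / w)) (by linarith)
      (contOn_VG2 (t := t) (ε := t / 2) ha (by linarith) hx.ne' hV1
        (fun τ z hτ hz => contAt_Qtwo2 hτ hz))).continuousWithinAt
  -- the `Q`-side derivatives, fixed t > 0
  have hQ1 : ∀ t : ℝ, 0 < t → ∀ x ∈ Ioi (0:ℝ),
      HasDerivAt (fun x => ∫ w in Icc a b, w * u₀ w * Qfun t (x / w))
        (∫ w in Icc a b, w * u₀ w * w⁻¹ * Qone t (x / w)) x := by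
    intro t ht x hx
    have hx0 : (0:ℝ) < x := hx
    refine paramHasDerivAt (ε := x / 2)
      (F := fun p w => w * u₀ w * Qfun t (p / w))
      (F' := fun p w => w * u₀ w * w⁻¹ * Qone t (p / w)) (by linarith)
      (contOn_VG (x := x) (ε := x / 2) ha (by linarith) hW1 (fun z hz => contAt_Qfun ht hz))
      (contOn_VG (x := x) (ε := x / 2) ha (by linarith) hW2 (fun z hz => contAt_Qone ht hz)) ?_
    intro p hp w hw
    have hp0 : 0 < p := ball_pos (by linarith) hp
    have hw0 : 0 < w := lt_of_lt_of_le ha hw.1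
    exact hasDerivAt_VG hw0.ne' _ (hasDerivAt_Q ht.ne' (by positivity))
  have hQ2 : ∀ t : ℝ, 0 < t → ∀ x ∈ Ioi (0:ℝ),
      HasDerivAt (fun x => ∫ w in Icc a b, w * u₀ w * w⁻¹ * Qone t (x / w))
        (∫ w in Icc a b, w * u₀ w * w⁻¹ * w⁻¹ * Qtwo t (x / w)) x := by
    intro t ht x hx
    have hx0 : (0:ℝ) < x := hx
    refine paramHasDerivAt (ε := x / 2)
      (F := fun p w => w * u₀ w * w⁻¹ * Qone t (p / w))
      (F' := fun p w => w * u₀ w * w⁻¹ * w⁻¹ * Qtwo t (p / w)) (by linarith)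
      (contOn_VG (x := x) (ε := x / 2) ha (by linarith) hW2 (fun z hz => contAt_Qone ht hz))
      (contOn_VG (x := x) (ε := x / 2) ha (by linarith) hW3 (fun z hz => contAt_Qtwo ht hz)) ?_
    intro p hp w hw
    have hp0 : 0 < p := ball_pos (by linarith) hp
    have hw0 : 0 < w := lt_of_lt_of_le ha hw.1
    exact hasDerivAt_VG hw0.ne' _ (hasDerivAt_Q1 ht.ne' (by positivity))
  refine ⟨?_, ?_, ?_⟩
  · -- C² in x
    intro t ht
    refine (contDiffOn_two_of isOpen_Ioi (hD1 t ht) (hD2 t ht) (hC2 t ht)).congr ?_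
    intro x hx
    exact hkey t x hx
  · -- C¹ in t
    intro x hx
    refine (contDiffOn_one_of isOpen_Ioi (hDT x hx) (hCT x hx)).congr ?_
    intro t _
    exact hkey t x hx
  · -- the PDE
    intro x hx t ht
    -- the time derivative
    have hLHS : deriv (fun τ => ∫ z in Ioi (0:ℝ),
        (1 / z) * u₀ (x / z) * lognormalDensity τ z) t
        = ∫ w in Icc a b, 1 / w * u₀ w * Qtwo t (x / w) := by
      have : (fun τ => ∫ z in Ioi (0:ℝ), (1 / z) * u₀ (x / z) * lognormalDensity τ z)
          = fun τ => ∫ w in Icc a b, 1 / w * u₀ w * lognormalDensity τ (x / w) :=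
        funext fun τ => hkey τ x hx
      rw [this]
      exact (hDT x hx t ht).deriv
    -- the space side
    have hfG : ∀ y : ℝ, 0 < y →
        (y ^ 2 * ∫ z in Ioi (0:ℝ), (1 / z) * u₀ (y / z) * lognormalDensity t z)
          = ∫ w in Icc a b, w * u₀ w * Qfun t (y / w) := by
      intro y hy
      rw [hkey t y hy, ← integral_const_mul]
      apply setIntegral_congr_fun measurableSet_Icc
      intro w hw
      have hw0 : 0 < w := lt_of_lt_of_le ha hw.1
      unfold Qfun
      field_simp
    have hderiv_eq : ∀ y ∈ Ioi (0:ℝ),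
        deriv (fun y => y ^ 2 * ∫ z in Ioi (0:ℝ),
          (1 / z) * u₀ (y / z) * lognormalDensity t z) y
          = ∫ w in Icc a b, w * u₀ w * w⁻¹ * Qone t (y / w) := by
      intro y hy
      have heq : (fun y => y ^ 2 * ∫ z in Ioi (0:ℝ),
          (1 / z) * u₀ (y / z) * lognormalDensity t z)
          =ᶠ[nhds y] (fun y => ∫ w in Icc a b, w * u₀ w * Qfun t (y / w)) :=
        Filter.eventuallyEq_of_mem (Ioi_mem_nhds hy) (fun y' hy' => hfG y' hy')
      rw [heq.deriv_eq]
      exact (hQ1 t ht y hy).deriv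
    have hRHS : deriv (deriv (fun y => y ^ 2 * ∫ z in Ioi (0:ℝ),
        (1 / z) * u₀ (y / z) * lognormalDensity t z)) x
        = ∫ w in Icc a b, w * u₀ w * w⁻¹ * w⁻¹ * Qtwo t (x / w) := by
      have heq : deriv (fun y => y ^ 2 * ∫ z in Ioi (0:ℝ),
          (1 / z) * u₀ (y / z) * lognormalDensity t z)
          =ᶠ[nhds x] (fun y => ∫ w in Icc a b, w * u₀ w * w⁻¹ * Qone t (y / w)) :=
        Filter.eventuallyEq_of_mem (Ioi_mem_nhds hx) hderiv_eq
      rw [heq.deriv_eq]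
      exact (hQ2 t ht x hx).deriv
    rw [hLHS, hRHS]
    apply setIntegral_congr_fun measurableSet_Icc
    intro w hw
    have hw0 : 0 < w := lt_of_lt_of_le ha hw.1
    field_simp
end
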